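/- Let X be an abelian group with automorphism t : X → X such that 1−t is also an automorphism, made into an Alexander quandle by a * b = t a + (1−t) b. Let N be the subgroup of X ⊗_ℤ X generated by all elements x ⊗ y − y ⊗ t x, and define φ : X × X → (X ⊗_ℤ X)/N by φ(x,y) = class of x ⊗ (1−t)y. Then φ is a quandle 2-cocycle: φ(a,a) = 0 for all a ∈ X, and φ(x,z) − φ(x*y, z) − φ(x,y) + φ(x*z, y*z) = 0 for all x,y,z ∈ X. -/
import Mathlib


open TensorProduct

/-- **Corollary.** Let `X` be an abelian group with automorphism `t` such that `1 - t`
(called `s` here, `s x = x - t x`) is also an automorphism, made into an Alexander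
quandle by `op a b = t a + (1 - t) b`.  Let `N ⊆ X ⊗ X` be the subgroup generated by
all `x ⊗ y - y ⊗ t x` and define `φ : X × X → (X ⊗ X)/N` by `φ (x, y) = [x ⊗ (1-t) y]`.
Then `φ` is a quandle 2-cocycle: `φ (a, a) = 0` and
`φ (x, z) - φ (x * y, z) - φ (x, y) + φ (x * z, y * z) = 0`. -/
theorem universal_alexander_two_cocycle
    {X : Type*} [AddCommGroup X] (t s : X ≃+ X) (hs : ∀ x, s x = x - t x)
    (op : X → X → X) (hop : ∀ a b, op a b = t a + s b)
    (N : AddSubgroup (X ⊗[ℤ] X))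
    (hN : N = AddSubgroup.closure {z | ∃ x y : X, z = x ⊗ₜ[ℤ] y - y ⊗ₜ[ℤ] t x})
    (φ : X → X → (X ⊗[ℤ] X) ⧸ N)
    (hφ : ∀ x y, φ x y = QuotientAddGroup.mk (x ⊗ₜ[ℤ] s y)) :
    (∀ a : X, φ a a = 0) ∧
      (∀ x y z : X, φ x z - φ (op x y) z - φ x y + φ (op x z) (op y z) = 0) := by
  have hg : ∀ a b : X, a ⊗ₜ[ℤ] b - b ⊗ₜ[ℤ] t a ∈ N := by
    intro a b
    rw [hN]
    exact AddSubgroup.subset_closure ⟨a, b, rfl⟩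
  constructor
  · intro a
    rw [hφ, QuotientAddGroup.eq_zero_iff]
    have : a ⊗ₜ[ℤ] s a = a ⊗ₜ[ℤ] a - a ⊗ₜ[ℤ] t a := by
      rw [hs, TensorProduct.tmul_sub]
    rw [this]
    exact hg a a
  · intro x y z
    simp only [hφ, hop]
    rw [← QuotientAddGroup.mk_sub, ← QuotientAddGroup.mk_sub, ← QuotientAddGroup.mk_add,
      QuotientAddGroup.eq_zero_iff]
    have key : x ⊗ₜ[ℤ] s z - (t x + s y) ⊗ₜ[ℤ] s z - x ⊗ₜ[ℤ] s y
        + (t x + s z) ⊗ₜ[ℤ] s (t y + s z)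
        = (x ⊗ₜ[ℤ] s z - s z ⊗ₜ[ℤ] t x) + (s z ⊗ₜ[ℤ] t x - t x ⊗ₜ[ℤ] t (s z))
          - (x ⊗ₜ[ℤ] s y - s y ⊗ₜ[ℤ] t x) - (s y ⊗ₜ[ℤ] t x - t x ⊗ₜ[ℤ] t (s y))
          - (s y ⊗ₜ[ℤ] s z - s z ⊗ₜ[ℤ] t (s y))
          + (s z ⊗ₜ[ℤ] s z - s z ⊗ₜ[ℤ] t (s z)) := by
      simp only [hs, map_add, map_sub, TensorProduct.tmul_add, TensorProduct.tmul_sub,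
        TensorProduct.add_tmul, TensorProduct.sub_tmul]
      abel
    rw [key]
    refine add_mem (sub_mem (sub_mem (sub_mem (add_mem ?_ ?_) ?_) ?_) ?_) ?_ <;>
      exact hg _ _
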